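/- arXiv:2507.02374 — 3 statements merged into one kernel-verified Lean document; each statement's English description precedes it below -/
import Mathlib

section
/- Let a > 0, define R(Γ) = ln(1+Γ) − a·√(1 − (1+Γ)⁻²) for Γ ≥ 0, and set Γ₀ = √(1/2 + √(1/4 + a²)) − 1. Then R is strictly decreasing on the interval [0, Γ₀] and strictly increasing on the interval [Γ₀, ∞). -/
set_option maxHeartbeats 1000000

open Real Set

lemma hasDeriv_aux (a Γ : ℝ) (hΓ : 0 < Γ) :
    HasDerivAt (fun y => Real.log (1 + y) - a * Real.sqrt (1 - ((1 + y) ^ 2)⁻¹))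
      (((1 + Γ) ^ 2 * Real.sqrt (1 - ((1 + Γ) ^ 2)⁻¹) - a) /
        ((1 + Γ) ^ 3 * Real.sqrt (1 - ((1 + Γ) ^ 2)⁻¹))) Γ := by
  have hx : (1:ℝ) < 1 + Γ := by linarith
  have hx0 : (0:ℝ) < 1 + Γ := by linarith
  have hinner : 0 < 1 - ((1 + Γ) ^ 2)⁻¹ := by
    have h1 : (1:ℝ) < (1 + Γ) ^ 2 := by nlinarith
    have h2 : ((1 + Γ) ^ 2)⁻¹ < 1 := by
      rw [inv_lt_one_iff₀]; right; exact h1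
    linarith
  have hs : 0 < Real.sqrt (1 - ((1 + Γ) ^ 2)⁻¹) := Real.sqrt_pos.2 hinner
  set s := Real.sqrt (1 - ((1 + Γ) ^ 2)⁻¹) with hsdef
  have h1 : HasDerivAt (fun y : ℝ => 1 + y) 1 Γ := (hasDerivAt_id Γ).const_add 1
  have h2 : HasDerivAt (fun y : ℝ => (1 + y) ^ 2) (2 * (1 + Γ)) Γ := by
    simpa using h1.fun_pow 2
  have h3 : HasDerivAt (fun y : ℝ => ((1 + y) ^ 2)⁻¹)
      (-(2 * (1 + Γ)) / ((1 + Γ) ^ 2) ^ 2) Γ := h2.inv (by positivity)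
  have h4 : HasDerivAt (fun y : ℝ => 1 - ((1 + y) ^ 2)⁻¹)
      (2 * (1 + Γ) / ((1 + Γ) ^ 2) ^ 2) Γ := by
    simpa [neg_div] using h3.const_sub 1
  have h5 := h4.sqrt hinner.ne'
  have h6 : HasDerivAt (fun y : ℝ => Real.log (1 + y)) (1 / (1 + Γ)) Γ := by
    simpa using h1.log hx0.ne'
  have h7 := h6.fun_sub (h5.const_mul a)
  refine h7.congr_deriv ?_
  rw [← hsdef]
  field_simp

/-- For `a > 0`, the function `R(Γ) = ln(1+Γ) − a·√(1 − (1+Γ)⁻²)` is strictly decreasing on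
`[0, Γ₀]` and strictly increasing on `[Γ₀, ∞)`, where `Γ₀ = √(1/2 + √(1/4 + a²)) − 1`. -/
theorem stmt_3 (a : ℝ) (ha : 0 < a)
    (R : ℝ → ℝ) (hR : ∀ Γ : ℝ, R Γ = Real.log (1 + Γ) - a * Real.sqrt (1 - ((1 + Γ) ^ 2)⁻¹))
    (Γ₀ : ℝ) (hΓ₀ : Γ₀ = Real.sqrt (1 / 2 + Real.sqrt (1 / 4 + a ^ 2)) - 1) :
    StrictAntiOn R (Set.Icc 0 Γ₀) ∧ StrictMonoOn R (Set.Ici Γ₀) := by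
  have hRfun : R = fun Γ => Real.log (1 + Γ) - a * Real.sqrt (1 - ((1 + Γ) ^ 2)⁻¹) :=
    funext hR
  set q := Real.sqrt (1/4 + a^2) with hqdef
  have hqsq : q ^ 2 = 1/4 + a^2 := Real.sq_sqrt (by positivity)
  have hqnn : 0 ≤ q := Real.sqrt_nonneg _
  have hq : 1/2 < q := by nlinarith
  have hx0nn : 0 ≤ Γ₀ + 1 := by
    rw [hΓ₀]; have := Real.sqrt_nonneg (1/2 + q); linarith
  have hx0sq : (Γ₀ + 1) ^ 2 = 1/2 + q := by
    rw [hΓ₀, sub_add_cancel, Real.sq_sqrt (by linarith)]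
  have hx0 : 1 < Γ₀ + 1 := by nlinarith
  have hΓ₀pos : 0 < Γ₀ := by linarith
  have ha2 : a ^ 2 = (Γ₀ + 1) ^ 4 - (Γ₀ + 1) ^ 2 := by nlinarith
  -- sign of deriv
  have hderiv : ∀ Γ : ℝ, 0 < Γ → HasDerivAt R
      (((1 + Γ) ^ 2 * Real.sqrt (1 - ((1 + Γ) ^ 2)⁻¹) - a) /
        ((1 + Γ) ^ 3 * Real.sqrt (1 - ((1 + Γ) ^ 2)⁻¹))) Γ := by
    intro Γ hΓ
    rw [hRfun]
    exact hasDeriv_aux a Γ hΓ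
  have key : ∀ Γ : ℝ, 0 < Γ →
      ((Γ < Γ₀ → deriv R Γ < 0) ∧ (Γ₀ < Γ → 0 < deriv R Γ)) := by
    intro Γ hΓ
    have hx : (1:ℝ) < 1 + Γ := by linarith
    have hinner : 0 < 1 - ((1 + Γ) ^ 2)⁻¹ := by
      have h1 : (1:ℝ) < (1 + Γ) ^ 2 := by nlinarith
      have h2 : ((1 + Γ) ^ 2)⁻¹ < 1 := by
        rw [inv_lt_one_iff₀]; right; exact h1
      linarith
    have hs : 0 < Real.sqrt (1 - ((1 + Γ) ^ 2)⁻¹) := Real.sqrt_pos.2 hinner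
    set s := Real.sqrt (1 - ((1 + Γ) ^ 2)⁻¹) with hsdef
    have hssq : s ^ 2 = 1 - ((1 + Γ) ^ 2)⁻¹ := Real.sq_sqrt hinner.le
    have hsq2 : ((1 + Γ) ^ 2 * s) ^ 2 = (1 + Γ) ^ 4 - (1 + Γ) ^ 2 := by
      rw [mul_pow, hssq]
      have : ((1 + Γ) ^ 2) ≠ 0 := by positivity
      field_simp
    have hde : deriv R Γ = ((1 + Γ) ^ 2 * s - a) / ((1 + Γ) ^ 3 * s) :=
      (hderiv Γ hΓ).deriv
    have hdenom : 0 < (1 + Γ) ^ 3 * s := by positivity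
    constructor
    · intro hlt
      rw [hde]
      apply div_neg_of_neg_of_pos _ hdenom
      have hxy : (1 + Γ) ^ 2 < (Γ₀ + 1) ^ 2 := by nlinarith
      have h4 : (1 + Γ) ^ 4 - (1 + Γ) ^ 2 < a ^ 2 := by
        nlinarith [mul_pos (sub_pos.2 hxy)
          (show 0 < (Γ₀ + 1) ^ 2 + (1 + Γ) ^ 2 - 1 by nlinarith)]
      nlinarith [mul_pos (pow_pos (by linarith : (0:ℝ) < 1 + Γ) 2) hs]
    · intro hlt
      rw [hde]
      apply div_pos _ hdenom
      have hxy : (Γ₀ + 1) ^ 2 < (1 + Γ) ^ 2 := by nlinarith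
      have h4 : a ^ 2 < (1 + Γ) ^ 4 - (1 + Γ) ^ 2 := by
        nlinarith [mul_pos (sub_pos.2 hxy)
          (show 0 < (Γ₀ + 1) ^ 2 + (1 + Γ) ^ 2 - 1 by nlinarith)]
      nlinarith [mul_pos (pow_pos (by linarith : (0:ℝ) < 1 + Γ) 2) hs]
  have hcont : ContinuousOn R (Set.Ici (0:ℝ)) := by
    rw [hRfun]
    apply ContinuousOn.sub
    · apply ContinuousOn.log
      · exact (continuous_const.add continuous_id).continuousOn
      · intro x hx
        simp only [Set.mem_Ici] at hx
        have : (0:ℝ) < 1 + x := by linarith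
        exact this.ne'
    · apply ContinuousOn.mul continuousOn_const
      apply ContinuousOn.sqrt
      apply ContinuousOn.sub continuousOn_const
      apply ContinuousOn.inv₀
      · exact ((continuous_const.add continuous_id).pow 2).continuousOn
      · intro x hx
        simp only [Set.mem_Ici] at hx
        have : (0:ℝ) < 1 + x := by linarith
        exact pow_ne_zero _ this.ne'
  constructor
  · apply strictAntiOn_of_deriv_neg (convex_Icc _ _)
      (hcont.mono (by intro x hx; exact hx.1))
    intro x hx
    rw [interior_Icc] at hx
    exact (key x hx.1).1 hx.2
  · apply strictMonoOn_of_deriv_pos (convex_Ici _)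
      (hcont.mono (by intro x hx; simp only [Set.mem_Ici] at *; linarith))
    intro x hx
    rw [interior_Ici] at hx
    exact (key x (by linarith [Set.mem_Ioi.mp hx])).2 hx
end

section
/- Let a > 0, define R(Γ) = ln(1+Γ) − a·√(1 − (1+Γ)⁻²) for Γ ≥ 0, and set Γ₀ = √(1/2 + √(1/4 + a²)) − 1. Then R(0) = 0 and R(Γ₀) < 0. -/
/-- For `a > 0` and `R(Γ) = ln(1+Γ) − a·√(1 − (1+Γ)⁻²)`, with
`Γ₀ = √(1/2 + √(1/4 + a²)) − 1`, one has `R(0) = 0` and `R(Γ₀) < 0`. -/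
theorem stmt_4 (a : ℝ) (ha : 0 < a)
    (R : ℝ → ℝ) (hR : ∀ Γ : ℝ, R Γ = Real.log (1 + Γ) - a * Real.sqrt (1 - ((1 + Γ) ^ 2)⁻¹))
    (Γ₀ : ℝ) (hΓ₀ : Γ₀ = Real.sqrt (1 / 2 + Real.sqrt (1 / 4 + a ^ 2)) - 1) :
    R 0 = 0 ∧ R Γ₀ < 0 := by
  constructor
  · simp [hR 0]
  · set s : ℝ := Real.sqrt (1 / 4 + a ^ 2) with hs
    have hs2 : s ^ 2 = 1 / 4 + a ^ 2 := Real.sq_sqrt (by positivity)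
    have hsgt : (1 / 2 : ℝ) < s := by
      nlinarith [Real.sqrt_nonneg (1 / 4 + a ^ 2), sq_nonneg a]
    set x : ℝ := Real.sqrt (1 / 2 + s) with hx
    have hx2 : x ^ 2 = 1 / 2 + s := Real.sq_sqrt (by linarith)
    have hx1 : 1 < x := by
      have h1 : (1 : ℝ) = Real.sqrt 1 := (Real.sqrt_one).symm
      rw [h1, hx]
      exact Real.sqrt_lt_sqrt (by norm_num) (by linarith)
    have hxpos : 0 < x := by linarith
    have h1Γ : 1 + Γ₀ = x := by rw [hΓ₀]; ring
    have hx2m1 : 0 < x ^ 2 - 1 := by nlinarith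
    have ha2 : a ^ 2 = x ^ 2 * (x ^ 2 - 1) := by nlinarith
    have harg : a ^ 2 * (1 - (x ^ 2)⁻¹) = (x ^ 2 - 1) ^ 2 := by
      field_simp
      nlinarith
    have key : a * Real.sqrt (1 - (x ^ 2)⁻¹) = x ^ 2 - 1 := by
      have := Real.sqrt_mul (sq_nonneg a) (1 - (x ^ 2)⁻¹)
      rw [harg, Real.sqrt_sq hx2m1.le, Real.sqrt_sq ha.le] at this
      linarith
    rw [hR, h1Γ, key]
    have hlog : Real.log x < x - 1 :=
      Real.log_lt_sub_one_of_pos hxpos (by linarith)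
    nlinarith
end

section
/- Let a > 0, define R(Γ) = ln(1+Γ) − a·√(1 − (1+Γ)⁻²) for Γ ≥ 0, and set Γ₀ = √(1/2 + √(1/4 + a²)) − 1. For every r > 0 there exists a unique Γ_th > Γ₀ such that R(Γ_th) = r; moreover, for every Γ ≥ 0, R(Γ) < r if and only if Γ < Γ_th. In other words, the outage event {R(Γ) < r} coincides with the SNR event {Γ < Γ_th}. -/
noncomputable def gfun (a : ℝ) : ℝ → ℝ := fun x => Real.log x - a * Real.sqrt (1 - (x ^ 2)⁻¹)

noncomputable def x0 (a : ℝ) : ℝ := Real.sqrt (1 / 2 + Real.sqrt (1 / 4 + a ^ 2))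

lemma x0_sq (a : ℝ) : (x0 a) ^ 2 = 1 / 2 + Real.sqrt (1 / 4 + a ^ 2) := by
  have h : (0:ℝ) ≤ 1 / 2 + Real.sqrt (1 / 4 + a ^ 2) := by positivity
  simpa [x0] using Real.sq_sqrt h

lemma one_lt_x0 {a : ℝ} (ha : 0 < a) : 1 < x0 a := by
  have h1 : (1:ℝ)/2 < Real.sqrt (1 / 4 + a ^ 2) :=
    (Real.lt_sqrt (by norm_num)).mpr (by nlinarith)
  have h2 : (1:ℝ) ^ 2 < (x0 a) ^ 2 := by rw [x0_sq]; nlinarith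
  exact lt_of_pow_lt_pow_left₀ 2 (Real.sqrt_nonneg _) h2

lemma x0_key {a : ℝ} (ha : 0 < a) : (x0 a) ^ 2 * ((x0 a) ^ 2 - 1) = a ^ 2 := by
  have hs : Real.sqrt (1 / 4 + a ^ 2) ^ 2 = 1 / 4 + a ^ 2 :=
    Real.sq_sqrt (by positivity)
  have h := x0_sq a
  nlinarith [hs, h]

lemma u_pos {x : ℝ} (hx : 1 < x) : 0 < 1 - (x ^ 2)⁻¹ := by
  have hx2 : 1 < x ^ 2 := by nlinarith
  have h1 : (x ^ 2)⁻¹ < 1 := by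
    rw [inv_lt_one_iff₀]; right; exact hx2
  linarith

lemma sqrt_u {x : ℝ} (hx : 1 < x) :
    Real.sqrt (1 - (x ^ 2)⁻¹) = Real.sqrt (x ^ 2 - 1) / x := by
  have hx0 : (0:ℝ) < x := by linarith
  have h : 1 - (x ^ 2)⁻¹ = (x ^ 2 - 1) / x ^ 2 := by field_simp
  rw [h, Real.sqrt_div (by nlinarith), Real.sqrt_sq hx0.le]

lemma gfun_hasDerivAt (a : ℝ) {x : ℝ} (hx : 1 < x) :
    HasDerivAt (gfun a)
      (x⁻¹ - a * ((2 * x / (x ^ 2) ^ 2) / (2 * Real.sqrt (1 - (x ^ 2)⁻¹)))) x := by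
  have hx0 : (0:ℝ) < x := by linarith
  have h1 : HasDerivAt (fun y : ℝ => y ^ 2) (2 * x) x := by
    simpa using hasDerivAt_pow 2 x
  have h2 : HasDerivAt (fun y : ℝ => (y ^ 2)⁻¹) (-(2 * x) / (x ^ 2) ^ 2) x :=
    h1.inv (by positivity)
  have h3 : HasDerivAt (fun y : ℝ => 1 - (y ^ 2)⁻¹) (2 * x / (x ^ 2) ^ 2) x := by
    have := h2.const_sub 1
    simpa [neg_div] using this
  have hu : (0:ℝ) < 1 - (x ^ 2)⁻¹ := u_pos hx
  have h4 := h3.sqrt hu.ne'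
  have h5 : HasDerivAt Real.log x⁻¹ x := Real.hasDerivAt_log hx0.ne'
  exact h5.sub (h4.const_mul a)

lemma gfun_deriv_pos {a : ℝ} (ha : 0 < a) {x : ℝ} (hx : 1 < x)
    (hkey : a < x * Real.sqrt (x ^ 2 - 1)) : 0 < deriv (gfun a) x := by
  rw [(gfun_hasDerivAt a hx).deriv]
  have hx0 : (0:ℝ) < x := by linarith
  have hs : 0 < Real.sqrt (x ^ 2 - 1) := Real.sqrt_pos.mpr (by nlinarith)
  rw [sqrt_u hx, sub_pos]
  set s := Real.sqrt (x ^ 2 - 1) with hsdef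
  have h1 : a * (2 * x / (x ^ 2) ^ 2 / (2 * (s / x))) = a / (x ^ 2 * s) := by
    field_simp
  rw [h1, div_lt_iff₀ (by positivity)]
  have h2 : x⁻¹ * (x ^ 2 * s) = x * s := by field_simp
  rw [h2]
  exact hkey

lemma gfun_nonpos {a : ℝ} (ha : 0 < a) {x : ℝ} (hx1 : 1 ≤ x) (hx2 : x ≤ x0 a) :
    gfun a x ≤ 0 := by
  have hx0 : (0:ℝ) < x := by linarith
  have hlog : Real.log x ≤ x - 1 := Real.log_le_sub_one_of_pos hx0
  have hx0a := one_lt_x0 ha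
  have hkey := x0_key ha
  have t0 : 0 ≤ x - 1 := by linarith
  have e1 : x - 1 ≤ x0 a ^ 2 - 1 := by nlinarith
  have e2 : x ^ 2 ≤ x0 a ^ 2 := by nlinarith
  have t1 : (x - 1) * x ^ 2 ≤ a ^ 2 := by
    have h5 := mul_le_mul e1 e2 (sq_nonneg x) (by nlinarith : (0:ℝ) ≤ x0 a ^ 2 - 1)
    nlinarith [h5]
  have hq : (x - 1) ^ 2 * x ^ 2 ≤ a ^ 2 * (x ^ 2 - 1) := by
    nlinarith [mul_le_mul_of_nonneg_left t1 t0, sq_nonneg a]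
  have h2 : (x - 1) ^ 2 ≤ a ^ 2 * (1 - (x ^ 2)⁻¹) := by
    have he : a ^ 2 * (1 - (x ^ 2)⁻¹) = a ^ 2 * (x ^ 2 - 1) / x ^ 2 := by
      field_simp
    rw [he, le_div_iff₀ (by positivity)]
    linarith
  have h3 : x - 1 ≤ a * Real.sqrt (1 - (x ^ 2)⁻¹) := by
    have he : a * Real.sqrt (1 - (x ^ 2)⁻¹) = Real.sqrt (a ^ 2 * (1 - (x ^ 2)⁻¹)) := by
      rw [Real.sqrt_mul (sq_nonneg a), Real.sqrt_sq ha.le]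
    rw [he]
    exact (Real.le_sqrt t0 (le_trans (sq_nonneg _) h2)).mpr h2
  unfold gfun
  linarith

lemma gfun_continuousOn {a : ℝ} (ha : 0 < a) :
    ContinuousOn (gfun a) (Set.Ici (x0 a)) := by
  have hx0a := one_lt_x0 ha
  have hc : ContinuousOn (fun x : ℝ => 1 - (x ^ 2)⁻¹) (Set.Ici (x0 a)) := by
    apply continuousOn_const.sub
    apply ContinuousOn.inv₀ (continuous_pow 2).continuousOn
    intro x hx
    have : (1:ℝ) < x := lt_of_lt_of_le hx0a hx
    positivity
  exact (Real.continuousOn_log.mono (fun x hx => by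
      simp only [Set.mem_Ici] at hx
      simp only [Set.mem_compl_iff, Set.mem_singleton_iff]
      intro h; rw [h] at hx; linarith)).sub
    (continuousOn_const.mul (Real.continuous_sqrt.comp_continuousOn hc))

lemma gfun_strictMono {a : ℝ} (ha : 0 < a) : StrictMonoOn (gfun a) (Set.Ici (x0 a)) := by
  have hx0a := one_lt_x0 ha
  apply strictMonoOn_of_deriv_pos (convex_Ici _) (gfun_continuousOn ha)
  intro x hx
  rw [interior_Ici, Set.mem_Ioi] at hx
  have hx1 : 1 < x := lt_trans hx0a hx
  apply gfun_deriv_pos ha hx1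
  have h1 : a ^ 2 < (x * Real.sqrt (x ^ 2 - 1)) ^ 2 := by
    rw [mul_pow, Real.sq_sqrt (by nlinarith : (0:ℝ) ≤ x ^ 2 - 1)]
    have e2 : x0 a ^ 2 < x ^ 2 := by nlinarith
    have e3 := mul_pos (sub_pos.mpr e2) (show (0:ℝ) < x ^ 2 + x0 a ^ 2 - 1 by nlinarith)
    nlinarith [x0_key ha, e3]
  have h2 : (0:ℝ) ≤ x * Real.sqrt (x ^ 2 - 1) := by positivity
  nlinarith [h1, h2, ha]

/-- For `a > 0`, `R(Γ) = ln(1+Γ) − a·√(1 − (1+Γ)⁻²)`, and `Γ₀ = √(1/2 + √(1/4 + a²)) − 1`: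
for every `r > 0` there is a unique `Γ_th > Γ₀` with `R(Γ_th) = r`, and for every `Γ ≥ 0`
the outage event `R(Γ) < r` coincides with the SNR event `Γ < Γ_th`. -/
theorem stmt_6 (a : ℝ) (ha : 0 < a)
    (R : ℝ → ℝ) (hR : ∀ Γ : ℝ, R Γ = Real.log (1 + Γ) - a * Real.sqrt (1 - ((1 + Γ) ^ 2)⁻¹))
    (Γ₀ : ℝ) (hΓ₀ : Γ₀ = Real.sqrt (1 / 2 + Real.sqrt (1 / 4 + a ^ 2)) - 1)
    (r : ℝ) (hr : 0 < r) :
    ∃ Γth : ℝ, Γ₀ < Γth ∧ R Γth = r ∧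
      (∀ Γ' : ℝ, Γ₀ < Γ' → R Γ' = r → Γ' = Γth) ∧
      (∀ Γ : ℝ, 0 ≤ Γ → (R Γ < r ↔ Γ < Γth)) := by
  have hx0a := one_lt_x0 ha
  have hx0pos : (0:ℝ) < x0 a := by linarith
  have hRg : ∀ Γ : ℝ, R Γ = gfun a (1 + Γ) := fun Γ => by rw [hR]; rfl
  have hΓx : 1 + Γ₀ = x0 a := by rw [hΓ₀]; unfold x0; ring
  set b := max (x0 a) (Real.exp (a + r)) with hb
  have hbx : x0 a ≤ b := le_max_left _ _
  have hgb : r ≤ gfun a b := by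
    have hbpos : (0:ℝ) < b := lt_of_lt_of_le hx0pos hbx
    have h1 : a + r ≤ Real.log b := by
      rw [← Real.log_exp (a + r)]
      exact Real.log_le_log (Real.exp_pos _) (le_max_right _ _)
    have h2 : Real.sqrt (1 - (b ^ 2)⁻¹) ≤ 1 := by
      rw [Real.sqrt_le_one]
      have : (0:ℝ) < (b ^ 2)⁻¹ := by positivity
      linarith
    have h3 : a * Real.sqrt (1 - (b ^ 2)⁻¹) ≤ a * 1 :=
      mul_le_mul_of_nonneg_left h2 ha.le
    unfold gfun
    linarith
  have hmono := gfun_strictMono ha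
  have hcont : ContinuousOn (gfun a) (Set.Icc (x0 a) b) :=
    (gfun_continuousOn ha).mono (Set.Icc_subset_Ici_self)
  have hg0 : gfun a (x0 a) ≤ 0 := gfun_nonpos ha hx0a.le le_rfl
  have hmem : r ∈ Set.Icc (gfun a (x0 a)) (gfun a b) := ⟨by linarith, hgb⟩
  obtain ⟨c, hc, hgc⟩ := intermediate_value_Icc hbx hcont hmem
  have hcx : x0 a < c := by
    rcases lt_or_eq_of_le hc.1 with h | h
    · exact h
    · exfalso; rw [← h] at hgc; linarith
  refine ⟨c - 1, by linarith, ?_, ?_, ?_⟩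
  · rw [hRg, show (1 + (c - 1)) = c by ring]; exact hgc
  · intro Γ' h1 h2
    rw [hRg] at h2
    have m1 : 1 + Γ' ∈ Set.Ici (x0 a) := Set.mem_Ici.mpr (by linarith)
    have m2 : c ∈ Set.Ici (x0 a) := Set.mem_Ici.mpr hcx.le
    have := hmono.injOn m1 m2 (by rw [h2, hgc])
    linarith
  · intro Γ hΓ
    rcases le_or_gt Γ Γ₀ with hle | hgt
    · constructor
      · intro _; linarith
      · intro _
        have h4 : gfun a (1 + Γ) ≤ 0 := gfun_nonpos ha (by linarith) (by linarith)
        rw [hRg]; linarith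
    · rw [hRg, ← hgc]
      have m1 : 1 + Γ ∈ Set.Ici (x0 a) := Set.mem_Ici.mpr (by linarith)
      have m2 : c ∈ Set.Ici (x0 a) := Set.mem_Ici.mpr hcx.le
      rw [hmono.lt_iff_lt m1 m2]
      constructor <;> intro h <;> linarith
end
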